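/- Let {X_k} be i.i.d. real random variables satisfying P(X₁>u)>0 for all u>0 and lim_{u→∞} P(X₁>u+a)/P(X₁>u)=0 for some a>0. Then for each fixed ε>0 there exists B>0 such that for all k≥3 and all u>0: P(S_k > u+a) ≤ ε·P(S_k>u) + P(S_{k−1}>u)/P(X₁>B), where S_k = X₁+⋯+X_k. -/

import Mathlib

open MeasureTheory ProbabilityTheory Filter Finset
open scoped ENNReal

lemma lemma_pl_pair_law {Ω : Type*} [MeasurableSpace Ω] (μ : Measure Ω) [IsProbabilityMeasure μ]
    {Y Z : Ω → ℝ} (hY : Measurable Y) (hZ : Measurable Z) (h : IndepFun Y Z μ)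
    {S : Set (ℝ × ℝ)} (hS : MeasurableSet S) :
    μ {ω | (Y ω, Z ω) ∈ S} = ∫⁻ y, (μ.map Z) {z | (y, z) ∈ S} ∂(μ.map Y) := by
  have hmap : μ.map (fun ω => (Y ω, Z ω)) = (μ.map Y).prod (μ.map Z) :=
    (indepFun_iff_map_prod_eq_prod_map_map hY.aemeasurable hZ.aemeasurable).mp h
  have h1 : μ {ω | (Y ω, Z ω) ∈ S} = μ.map (fun ω => (Y ω, Z ω)) S := by
    rw [Measure.map_apply (hY.prodMk hZ) hS]; rfl
  rw [h1, hmap, Measure.prod_apply hS]; rfl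

theorem lemma_pl
    {Ω : Type*} [MeasurableSpace Ω] (μ : Measure Ω) [IsProbabilityMeasure μ]
    (X : ℕ → Ω → ℝ)
    (hXmeas : ∀ k, Measurable (X k))
    (hXindep : iIndepFun X μ)
    (hXid : ∀ k, Measure.map (X k) μ = Measure.map (X 0) μ)
    (hpos : ∀ u : ℝ, 0 < u → 0 < (μ {ω | X 0 ω > u}).toReal)
    (a : ℝ) (ha : 0 < a)
    (htail : Tendsto (fun u : ℝ =>
        (μ {ω | X 0 ω > u + a}).toReal / (μ {ω | X 0 ω > u}).toReal) atTop (nhds 0)) :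
    ∀ ε : ℝ, 0 < ε → ∃ B : ℝ, 0 < B ∧ ∀ k : ℕ, 3 ≤ k → ∀ u : ℝ, 0 < u →
      (μ {ω | ∑ i ∈ range k, X i ω > u + a}).toReal
        ≤ ε * (μ {ω | ∑ i ∈ range k, X i ω > u}).toReal
          + (μ {ω | ∑ i ∈ range (k - 1), X i ω > u}).toReal
              / (μ {ω | X 0 ω > B}).toReal := by
  intro ε hε
  set τ : ℝ → ℝ≥0∞ := fun v => μ {ω | X 0 ω > v} with hτdef
  -- basic facts about τ
  have htau_preim : ∀ (j : ℕ) (v : ℝ), {ω | X j ω > v} = X j ⁻¹' (Set.Ioi v) := by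
    intro j v; rfl
  have tail_eq : ∀ (j : ℕ) (v : ℝ), μ {ω | X j ω > v} = τ v := by
    intro j v
    rw [htau_preim j v, ← Measure.map_apply (hXmeas j) measurableSet_Ioi, hXid j,
      Measure.map_apply (hXmeas 0) measurableSet_Ioi]
    rfl
  have hmapτ : ∀ (j : ℕ) (v : ℝ), (μ.map (X j)) (Set.Ioi v) = τ v := by
    intro j v
    rw [Measure.map_apply (hXmeas j) measurableSet_Ioi, ← htau_preim j v, tail_eq j v]
  have htau_mono : ∀ {v w : ℝ}, v ≤ w → τ w ≤ τ v := by
    intro v w hvw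
    exact measure_mono (fun ω hω => lt_of_le_of_lt hvw hω)
  have htau_ne_top : ∀ v : ℝ, τ v ≠ ⊤ := fun v => measure_ne_top μ _
  have htau_pos : ∀ v : ℝ, 0 < v → τ v ≠ 0 := by
    intro v hv h0
    have := hpos v hv
    rw [hτdef] at h0
    simp only [h0, ENNReal.toReal_zero] at this
    exact lt_irrefl _ this
  -- extraction from the tail-ratio limit
  have key : ∀ δ : ℝ, 0 < δ → ∃ M : ℝ, 1 ≤ M ∧ ∀ v, M ≤ v →
      τ (v + a) ≤ ENNReal.ofReal δ * τ v := by
    intro δ hδ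
    have hev := htail.eventually (gt_mem_nhds hδ)
    rw [eventually_atTop] at hev
    obtain ⟨M₀, hM₀⟩ := hev
    refine ⟨max M₀ 1, le_max_right _ _, fun v hv => ?_⟩
    have h1 : (1:ℝ) ≤ v := le_trans (le_max_right M₀ 1) hv
    have hvpos : (0:ℝ) < v := by linarith
    have hr := hM₀ v (le_trans (le_max_left _ _) hv)
    have hp := hpos v hvpos
    have hle : (μ {ω | X 0 ω > v + a}).toReal ≤ δ * (μ {ω | X 0 ω > v}).toReal := by
      rw [div_lt_iff₀ hp] at hr
      linarith
    calc τ (v + a) = ENNReal.ofReal ((τ (v + a)).toReal) :=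
          (ENNReal.ofReal_toReal (htau_ne_top _)).symm
      _ ≤ ENNReal.ofReal (δ * (τ v).toReal) := ENNReal.ofReal_le_ofReal hle
      _ = ENNReal.ofReal δ * ENNReal.ofReal ((τ v).toReal) := ENNReal.ofReal_mul hδ.le
      _ = ENNReal.ofReal δ * τ v := by rw [ENNReal.ofReal_toReal (htau_ne_top _)]
  obtain ⟨B₀, hB₀1, hB₀⟩ := key (ε/2) (by linarith)
  set c : ℝ := B₀ + a with hcdef
  have hcpos : 0 < c := by linarith
  set q : ℝ := (τ c).toReal with hqdef
  have hq : 0 < q := hpos c hcpos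
  obtain ⟨T, hT1, hT⟩ := key ((ε/2) * q) (by positivity)
  set B : ℝ := T + B₀ + a with hBdef
  have hBpos : 0 < B := by linarith
  have hτB0 : τ B ≠ 0 := htau_pos B hBpos
  have hτBt : τ B ≠ ⊤ := htau_ne_top B
  refine ⟨B, hBpos, ?_⟩
  -- the pointwise "core claim"
  have CC : ∀ t : ℝ, τ (t - B₀) ≤
      ENNReal.ofReal (ε/2) * (τ (t - c) * τ c) + (τ B)⁻¹ * τ t := by
    intro t
    by_cases hcase : t ≤ B
    · have h1 : τ B ≤ τ t := htau_mono hcase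
      have h2 : (1:ℝ≥0∞) ≤ (τ B)⁻¹ * τ t := by
        rw [← ENNReal.inv_mul_cancel hτB0 hτBt]
        exact mul_le_mul_right h1 _
      calc τ (t - B₀) ≤ 1 := prob_le_one
        _ ≤ (τ B)⁻¹ * τ t := h2
        _ ≤ _ := le_add_self
    · push_neg at hcase
      have hv : T ≤ t - c := by rw [hcdef]; linarith
      have h1 := hT (t - c) hv
      have heq : t - B₀ = t - c + a := by rw [hcdef]; ring
      have h2 : ENNReal.ofReal (ε/2 * q) * τ (t - c)
          = ENNReal.ofReal (ε/2) * (τ (t - c) * τ c) := by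
        rw [ENNReal.ofReal_mul (by linarith), hqdef, ENNReal.ofReal_toReal (htau_ne_top _)]
        ring
      calc τ (t - B₀) = τ (t - c + a) := by rw [heq]
        _ ≤ ENNReal.ofReal (ε/2 * q) * τ (t - c) := h1
        _ = ENNReal.ofReal (ε/2) * (τ (t - c) * τ c) := h2
        _ ≤ _ := le_add_right le_rfl
  intro k hk u hu
  obtain ⟨n, rfl⟩ : ∃ n, k = n + 3 := ⟨k - 3, by omega⟩
  -- names for the relevant random variables
  set R : Ω → ℝ := fun ω => ∑ i ∈ range (n+1), X i ω with hRdef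
  set Y : Ω → ℝ := fun ω => ∑ i ∈ range (n+2), X i ω with hYdef
  set V : Ω → ℝ := fun ω => X (n+1) ω + X (n+2) ω with hVdef
  have hRmeas : Measurable R := Finset.measurable_sum _ (fun i _ => hXmeas i)
  have hYmeas : Measurable Y := Finset.measurable_sum _ (fun i _ => hXmeas i)
  have hVmeas : Measurable V := (hXmeas (n+1)).add (hXmeas (n+2))
  have hYR : ∀ ω, Y ω = R ω + X (n+1) ω := by
    intro ω; rw [hYdef, hRdef]; exact Finset.sum_range_succ _ _
  have hSY : ∀ ω, (∑ i ∈ range (n+3), X i ω) = Y ω + X (n+2) ω := by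
    intro ω; rw [hYdef]; exact Finset.sum_range_succ _ _
  have hSRV : ∀ ω, (∑ i ∈ range (n+3), X i ω) = R ω + V ω := by
    intro ω; rw [hSY ω, hYR ω, hVdef]; ring
  -- independence statements
  have indep_sum_sum : ∀ (s t : Finset ℕ), Disjoint s t →
      IndepFun (fun ω => ∑ i ∈ s, X i ω) (fun ω => ∑ i ∈ t, X i ω) μ := by
    intro s t hd
    have h := hXindep.indepFun_finset s t hd hXmeas
    have hsum : ∀ (s : Finset ℕ), Measurable (fun v : s → ℝ => ∑ i, v i) := fun s =>
      Finset.measurable_sum _ (fun i _ => measurable_pi_apply i)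
    have h2 := h.comp (hsum s) (hsum t)
    convert h2 using 1 <;> funext ω <;>
      simp only [Function.comp] <;> rw [← Finset.sum_coe_sort]
  have hsingle : ∀ j : ℕ, (fun ω => ∑ i ∈ ({j} : Finset ℕ), X i ω) = X j := by
    intro j; funext ω; exact Finset.sum_singleton _ _
  have hpair : (fun ω => ∑ i ∈ ({n+1, n+2} : Finset ℕ), X i ω) = V := by
    funext ω; rw [hVdef]
    exact Finset.sum_pair (show n+1 ≠ n+2 by omega)
  have hYW₂ : IndepFun Y (X (n+2)) μ := by
    have := indep_sum_sum (range (n+2)) {n+2}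
      (by simp [Finset.disjoint_singleton_right])
    rwa [hsingle (n+2)] at this
  have hRW₁ : IndepFun R (X (n+1)) μ := by
    have := indep_sum_sum (range (n+1)) {n+1}
      (by simp [Finset.disjoint_singleton_right])
    rwa [hsingle (n+1)] at this
  have hRV : IndepFun R V μ := by
    have := indep_sum_sum (range (n+1)) {n+1, n+2}
      (by simp [Finset.disjoint_insert_right, Finset.disjoint_singleton_right])
    rwa [hpair] at this
  have hW₁W₂ : IndepFun (X (n+1)) (X (n+2)) μ := hXindep.indepFun (by omega)
  -- tail of V dominates the rectangle
  have hV_tail : ∀ s : ℝ, τ (s - c) * τ c ≤ (μ.map V) (Set.Ioi s) := by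
    intro s
    rw [Measure.map_apply hVmeas measurableSet_Ioi]
    have hsub : (X (n+1) ⁻¹' Set.Ioi (s - c)) ∩ (X (n+2) ⁻¹' Set.Ioi c)
        ⊆ V ⁻¹' Set.Ioi s := by
      rintro ω ⟨h1, h2⟩
      simp only [Set.mem_preimage, Set.mem_Ioi] at h1 h2 ⊢
      rw [hVdef]; dsimp only; linarith
    calc τ (s - c) * τ c
        = μ (X (n+1) ⁻¹' Set.Ioi (s - c)) * μ (X (n+2) ⁻¹' Set.Ioi c) := by
          rw [← htau_preim, ← htau_preim, tail_eq, tail_eq]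
      _ = μ ((X (n+1) ⁻¹' Set.Ioi (s - c)) ∩ (X (n+2) ⁻¹' Set.Ioi c)) :=
          (hW₁W₂.measure_inter_preimage_eq_mul _ _ measurableSet_Ioi measurableSet_Ioi).symm
      _ ≤ _ := measure_mono hsub
  -- measurability of the integrands
  have hint_mono : ∀ (ν : Measure ℝ), Monotone (fun y : ℝ => ν (Set.Ioi (u - y))) := by
    intro ν y₁ y₂ h
    exact measure_mono (Set.Ioi_subset_Ioi (by linarith))
  have hint_meas : ∀ (ν : Measure ℝ), Measurable (fun y : ℝ => ν (Set.Ioi (u - y))) :=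
    fun ν => (hint_mono ν).measurable
  -- the two measurable subsets of the plane we use
  have hS₁ : MeasurableSet {p : ℝ × ℝ | p.1 ≤ u - B₀ ∧ p.1 + p.2 > u + a} :=
    (measurableSet_le measurable_fst measurable_const).inter
      (measurableSet_lt measurable_const (measurable_fst.add measurable_snd))
  have hSgt : ∀ b : ℝ, MeasurableSet {p : ℝ × ℝ | p.1 + p.2 > b} := fun b =>
    measurableSet_lt measurable_const (measurable_fst.add measurable_snd)
  -- STEP 1 : the part with Y ≤ u - B₀
  have step1 : μ {ω | (Y ω, X (n+2) ω) ∈ {p : ℝ × ℝ | p.1 ≤ u - B₀ ∧ p.1 + p.2 > u + a}}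
      ≤ ENNReal.ofReal (ε/2)
          * μ {ω | (Y ω, X (n+2) ω) ∈ {p : ℝ × ℝ | p.1 + p.2 > u}} := by
    rw [lemma_pl_pair_law μ hYmeas (hXmeas _) hYW₂ hS₁,
      lemma_pl_pair_law μ hYmeas (hXmeas _) hYW₂ (hSgt u),
      ← lintegral_const_mul' _ _ ENNReal.ofReal_ne_top]
    apply lintegral_mono
    intro y
    dsimp only
    by_cases hy : y ≤ u - B₀
    · have h1 : {z : ℝ | (y, z) ∈ {p : ℝ × ℝ | p.1 ≤ u - B₀ ∧ p.1 + p.2 > u + a}}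
          = Set.Ioi (u + a - y) := by
        ext z
        simp only [Set.mem_setOf_eq, Set.mem_Ioi, hy, true_and]
        constructor <;> intro h <;> linarith
      have h2 : {z : ℝ | (y, z) ∈ {p : ℝ × ℝ | p.1 + p.2 > u}} = Set.Ioi (u - y) := by
        ext z
        simp only [Set.mem_setOf_eq, Set.mem_Ioi]
        constructor <;> intro h <;> linarith
      rw [h1, h2, hmapτ, hmapτ]
      have h3 : u + a - y = (u - y) + a := by ring
      rw [h3]
      exact hB₀ (u - y) (by linarith)
    · have h1 : {z : ℝ | (y, z) ∈ {p : ℝ × ℝ | p.1 ≤ u - B₀ ∧ p.1 + p.2 > u + a}}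
          = (∅ : Set ℝ) := by
        ext z; simp only [Set.mem_setOf_eq, Set.mem_empty_iff_false, iff_false]
        rintro ⟨h, -⟩; exact hy h
      rw [h1]
      simp
  -- STEP 2 : the part with Y > u - B₀
  have hsec : ∀ (y b : ℝ), {z : ℝ | (y, z) ∈ {p : ℝ × ℝ | p.1 + p.2 > b}}
      = Set.Ioi (b - y) := by
    intro y b; ext z
    simp only [Set.mem_setOf_eq, Set.mem_Ioi]
    constructor <;> intro h <;> linarith
  have step2 : μ {ω | (R ω, X (n+1) ω) ∈ {p : ℝ × ℝ | p.1 + p.2 > u - B₀}}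
      ≤ ENNReal.ofReal (ε/2)
            * μ {ω | (R ω, V ω) ∈ {p : ℝ × ℝ | p.1 + p.2 > u}}
        + (τ B)⁻¹ * μ {ω | (R ω, X (n+1) ω) ∈ {p : ℝ × ℝ | p.1 + p.2 > u}} := by
    rw [lemma_pl_pair_law μ hRmeas (hXmeas _) hRW₁ (hSgt (u - B₀)),
      lemma_pl_pair_law μ hRmeas (hXmeas _) hRW₁ (hSgt u),
      lemma_pl_pair_law μ hRmeas hVmeas hRV (hSgt u)]
    have hmeasτu : Measurable (fun r : ℝ => (μ.map (X (n+1))) {z | (r, z) ∈ {p : ℝ × ℝ | p.1 + p.2 > u}}) := by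
      have : (fun r : ℝ => (μ.map (X (n+1))) {z | (r, z) ∈ {p : ℝ × ℝ | p.1 + p.2 > u}})
          = fun r : ℝ => (μ.map (X (n+1))) (Set.Ioi (u - r)) := by
        funext r; rw [hsec]
      rw [this]; exact hint_meas _
    have hmeasV : Measurable (fun r : ℝ => (μ.map V) {z | (r, z) ∈ {p : ℝ × ℝ | p.1 + p.2 > u}}) := by
      have : (fun r : ℝ => (μ.map V) {z | (r, z) ∈ {p : ℝ × ℝ | p.1 + p.2 > u}})
          = fun r : ℝ => (μ.map V) (Set.Ioi (u - r)) := by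
        funext r; rw [hsec]
      rw [this]; exact hint_meas _
    calc ∫⁻ r, (μ.map (X (n+1))) {z | (r, z) ∈ {p : ℝ × ℝ | p.1 + p.2 > u - B₀}} ∂(μ.map R)
        ≤ ∫⁻ r, (ENNReal.ofReal (ε/2)
              * (μ.map V) {z | (r, z) ∈ {p : ℝ × ℝ | p.1 + p.2 > u}}
            + (τ B)⁻¹ * (μ.map (X (n+1))) {z | (r, z) ∈ {p : ℝ × ℝ | p.1 + p.2 > u}})
            ∂(μ.map R) := by
          apply lintegral_mono
          intro r
          dsimp only
          rw [hsec r (u - B₀), hsec r u, hmapτ, hmapτ]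
          have h1 : u - B₀ - r = (u - r) - B₀ := by ring
          rw [h1]
          refine le_trans (CC (u - r)) (add_le_add ?_ le_rfl)
          exact mul_le_mul_right (hV_tail (u - r)) _
      _ = _ := by
          rw [lintegral_add_left (hmeasV.const_mul _), lintegral_const_mul _ hmeasV,
            lintegral_const_mul _ hmeasτu]
  -- identify the various events
  have hEY : {ω | (Y ω, X (n+2) ω) ∈ {p : ℝ × ℝ | p.1 + p.2 > u}}
      = {ω | ∑ i ∈ range (n+3), X i ω > u} := by
    ext ω; simp only [Set.mem_setOf_eq, hSY ω]
  have hERV : {ω | (R ω, V ω) ∈ {p : ℝ × ℝ | p.1 + p.2 > u}}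
      = {ω | ∑ i ∈ range (n+3), X i ω > u} := by
    ext ω; simp only [Set.mem_setOf_eq, hSRV ω]
  have hER : {ω | (R ω, X (n+1) ω) ∈ {p : ℝ × ℝ | p.1 + p.2 > u}}
      = {ω | Y ω > u} := by
    ext ω; simp only [Set.mem_setOf_eq, hYR ω]
  have hERB : {ω | (R ω, X (n+1) ω) ∈ {p : ℝ × ℝ | p.1 + p.2 > u - B₀}}
      = {ω | Y ω > u - B₀} := by
    ext ω; simp only [Set.mem_setOf_eq, hYR ω]
  rw [hEY] at step1
  rw [hERV, hER, hERB] at step2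
  -- combine
  have decomp : μ {ω | ∑ i ∈ range (n+3), X i ω > u + a}
      ≤ μ {ω | (Y ω, X (n+2) ω) ∈ {p : ℝ × ℝ | p.1 ≤ u - B₀ ∧ p.1 + p.2 > u + a}}
        + μ {ω | Y ω > u - B₀} := by
    refine le_trans (measure_mono ?_) (measure_union_le _ _)
    intro ω hω
    simp only [Set.mem_setOf_eq, hSY ω] at hω
    by_cases hy : Y ω ≤ u - B₀
    · exact Or.inl (by exact ⟨hy, hω⟩)
    · exact Or.inr (by simpa using lt_of_not_ge hy)
  have main : μ {ω | ∑ i ∈ range (n+3), X i ω > u + a}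
      ≤ ENNReal.ofReal ε * μ {ω | ∑ i ∈ range (n+3), X i ω > u}
        + (τ B)⁻¹ * μ {ω | Y ω > u} := by
    have hhalf : ENNReal.ofReal (ε/2) + ENNReal.ofReal (ε/2) = ENNReal.ofReal ε := by
      rw [← ENNReal.ofReal_add (by linarith) (by linarith)]
      norm_num
    calc μ {ω | ∑ i ∈ range (n+3), X i ω > u + a}
        ≤ μ {ω | (Y ω, X (n+2) ω) ∈ {p : ℝ × ℝ | p.1 ≤ u - B₀ ∧ p.1 + p.2 > u + a}}
            + μ {ω | Y ω > u - B₀} := decomp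
      _ ≤ ENNReal.ofReal (ε/2) * μ {ω | ∑ i ∈ range (n+3), X i ω > u}
            + (ENNReal.ofReal (ε/2) * μ {ω | ∑ i ∈ range (n+3), X i ω > u}
              + (τ B)⁻¹ * μ {ω | Y ω > u}) := add_le_add step1 step2
      _ = ENNReal.ofReal ε * μ {ω | ∑ i ∈ range (n+3), X i ω > u}
            + (τ B)⁻¹ * μ {ω | Y ω > u} := by
          rw [← add_assoc, ← add_mul, hhalf]
  -- convert to real numbers
  have hYrange : {ω | Y ω > u} = {ω | ∑ i ∈ range (n+3-1), X i ω > u} := rfl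
  have hRHS_ne_top : ENNReal.ofReal ε * μ {ω | ∑ i ∈ range (n+3), X i ω > u}
      + (τ B)⁻¹ * μ {ω | Y ω > u} ≠ ⊤ := by
    apply ENNReal.add_ne_top.mpr
    constructor
    · exact ENNReal.mul_ne_top ENNReal.ofReal_ne_top (measure_ne_top _ _)
    · exact ENNReal.mul_ne_top (ENNReal.inv_ne_top.mpr hτB0) (measure_ne_top _ _)
  have hto := ENNReal.toReal_mono hRHS_ne_top main
  rw [ENNReal.toReal_add (ENNReal.mul_ne_top ENNReal.ofReal_ne_top (measure_ne_top _ _))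
      (ENNReal.mul_ne_top (ENNReal.inv_ne_top.mpr hτB0) (measure_ne_top _ _)),
    ENNReal.toReal_mul, ENNReal.toReal_mul, ENNReal.toReal_ofReal hε.le,
    ENNReal.toReal_inv] at hto
  rw [← hYrange]
  calc (μ {ω | ∑ i ∈ range (n+3), X i ω > u + a}).toReal
      ≤ ε * (μ {ω | ∑ i ∈ range (n+3), X i ω > u}).toReal
        + ((τ B).toReal)⁻¹ * (μ {ω | Y ω > u}).toReal := hto
    _ = ε * (μ {ω | ∑ i ∈ range (n+3), X i ω > u}).toReal
        + (μ {ω | Y ω > u}).toReal / (μ {ω | X 0 ω > B}).toReal := by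
        rw [div_eq_inv_mul]
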